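/- Uniqueness/universality of the ZH normal form (Theorem): for any function a : {0,1}ⁿ → ℂ, the Schur (entrywise) product over all b⃗ ∈ {0,1}ⁿ of the vectors ι_b⃗ · Hₙ(a(b⃗)) equals the vector Σ_{b⃗} a(b⃗) |b⃗⟩. Consequently every vector in ℂ^(2ⁿ) is expressible in this form, and two normal forms with equal interpretations have equal coefficient functions. -/

import Mathlib

open Finset

/-- The NOT (bit-flip) matrix on `ℂ²`, indexed by `Bool`. -/
def NOTm : Matrix Bool Bool ℂ := fun r c => if r ≠ c then 1 else 0

/-- The indexing map `ι_b⃗ = ⊗ᵢ NOT^(1-bᵢ)`. -/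
def iota {n : ℕ} (b : Fin n → Bool) : Matrix (Fin n → Bool) (Fin n → Bool) ℂ :=
  fun r c => ∏ k, (if b k then (1 : Matrix Bool Bool ℂ) else NOTm) (r k) (c k)

/-- The arity-`n` H-box state: `c` at the all-ones coordinate, 1 elsewhere. -/
def Hvec (n : ℕ) (c : ℂ) : (Fin n → Bool) → ℂ :=
  fun b => if ∀ k, b k = true then c else 1

/-- Standard basis vector `|b⃗⟩`. -/
def ket {n : ℕ} (b : Fin n → Bool) : (Fin n → Bool) → ℂ :=
  fun r => if r = b then 1 else 0

lemma iota_apply {n : ℕ} (b r c : Fin n → Bool) :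
    iota b r c = if c = (fun k => if b k then r k else !(r k)) then 1 else 0 := by
  unfold iota NOTm
  by_cases h : c = (fun k => if b k then r k else !(r k))
  · subst h
    rw [if_pos rfl]
    apply Finset.prod_eq_one
    intro k _
    by_cases hb : b k <;> simp [hb, Matrix.one_apply]
  · rw [if_neg h]
    obtain ⟨k, hk⟩ : ∃ k, c k ≠ (if b k then r k else !(r k)) := by
      by_contra hc; push_neg at hc; exact h (funext hc)
    apply Finset.prod_eq_zero (Finset.mem_univ k)
    by_cases hb : b k
    · simp only [hb, if_true] at hk ⊢
      have e : ∀ M : Matrix Bool Bool ℂ, (if b k = true then 1 else M) = 1 := fun M => if_pos hb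
      exact (congrFun (congrFun (e _) _) _).trans (by simp [Matrix.one_apply, Ne.symm hk])
    · simp only [hb, if_false] at hk ⊢
      cases hr : r k <;> cases hc : c k <;> simp_all

lemma factor_eq {n : ℕ} (b r : Fin n → Bool) (v : ℂ) :
    (iota b).mulVec (Hvec n v) r = if r = b then v else 1 := by
  rw [Matrix.mulVec]
  simp only [dotProduct, iota_apply, ite_mul, one_mul, zero_mul,
    Finset.sum_ite_eq', Finset.mem_univ, if_true]
  unfold Hvec
  congr 1
  simp only [eq_iff_iff]
  constructor
  · intro h
    funext k
    have := h k
    cases hb : b k <;> simp [hb] at this <;> simp [hb, this]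
  · intro h k
    subst h
    cases hb : r k <;> simp [hb]

/-- normal form theorem: the Schur (entrywise) product over all
`b⃗ ∈ {0,1}ⁿ` of the vectors `ι_b⃗ · Hₙ(a(b⃗))` equals `Σ_b⃗ a(b⃗) |b⃗⟩`. -/
theorem normal_form (n : ℕ) (a : (Fin n → Bool) → ℂ) :
    (fun c => ∏ b : Fin n → Bool, (iota b).mulVec (Hvec n (a b)) c)
      = ∑ b : Fin n → Bool, a b • ket b := by
  funext r
  simp only [factor_eq, Finset.sum_apply, Pi.smul_apply, ket, smul_eq_mul, mul_ite,
    mul_one, mul_zero, Finset.prod_ite_eq, Finset.sum_ite_eq, Finset.mem_univ, if_true]
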